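/- Let ψ be a positive linear functional on the space B(ν) of Borel functions dominated in absolute value by some ⊕g ∈ G(ν), and suppose ψ(f) − φ(f) ≤ C < ∞ for all f ∈ B(ν), where φ is increasing convex with φ(f) ≤ m + Σ_n ∫ g_n dν_n whenever f ≤ m + ⊕g. Then ψ(⊕g) = Σ_n ∫ g_n dν_n for every ⊕g ∈ G(ν) ∩ B(ν). -/

import Mathlib

set_option linter.unusedSectionVars false


set_option autoImplicit false

open MeasureTheory Filter Topology ENNReal

variable {X : ℕ → Type*} [∀ n, TopologicalSpace (X n)] [∀ n, PolishSpace (X n)]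
  [∀ n, MeasurableSpace (X n)] [∀ n, BorelSpace (X n)]

/-- `⊕g(x) = Σ_n g_n(x_n)`, computed in `ℝ≥0∞` (the `g_n` are nonnegative). -/
noncomputable def oplus (g : ∀ n, X n → ℝ) (x : ∀ n, X n) : ℝ≥0∞ :=
  ∑' n, ENNReal.ofReal (g n (x n))

/-- `⊕g ∈ G(ν)`: the `g_n` are nonnegative Borel with `Σ_n ∫ g_n dν_n < ∞`. -/
def Gadm (ν : ∀ n, Measure (X n)) (g : ∀ n, X n → ℝ) : Prop :=
  (∀ n, Measurable (g n)) ∧ (∀ n x, 0 ≤ g n x) ∧ (∀ n, Integrable (g n) (ν n)) ∧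
    Summable fun n => ∫ x, g n x ∂ν n

/-- `f ∈ B(ν)`: Borel measurable and `|f| ≤ ⊕g` for some `⊕g ∈ G(ν)`. -/
def BigB (ν : ∀ n, Measure (X n)) (f : (∀ n, X n) → ℝ) : Prop :=
  Measurable f ∧ ∃ g, Gadm ν g ∧
    ∀ x, oplus g x = ⊤ ∨ |f x| ≤ (oplus g x).toReal

/-- `f ∈ U(ν)`: upper semicontinuous, `f⁺` bounded and `f⁻ ∈ B(ν)`. -/
def BigU (ν : ∀ n, Measure (X n)) (f : (∀ n, X n) → ℝ) : Prop :=
  UpperSemicontinuous f ∧ (∃ c, ∀ x, f x ≤ c) ∧ BigB ν fun x => max (-f x) 0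

/-- `𝒫(ν)`: Borel probability measures on the product with `n`-th marginal `ν n`. -/
def coupling (ν : ∀ n, Measure (X n)) : Set (Measure (∀ n, X n)) :=
  {μ | IsProbabilityMeasure μ ∧ ∀ n, μ.map (fun x => x n) = ν n}

/-! ### Auxiliary lemmas -/

private lemma eq_zero_of_forall_mul_le {d C : ℝ} (h : ∀ t : ℝ, t * d ≤ C) : d = 0 := by
  by_contra hd
  have h1 := h ((C + 1) / d)
  rw [div_mul_cancel₀ _ hd] at h1
  linarith

private lemma nonpos_of_forall_pos_mul_le {d C : ℝ} (h : ∀ c : ℝ, 0 < c → c * d ≤ C) :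
    d ≤ 0 := by
  by_contra hd
  push_neg at hd
  have hC : 0 < C + 1 := by have := h 1 one_pos; nlinarith
  have h1 := h ((C + 1) / d) (div_pos hC hd)
  rw [div_mul_cancel₀ _ (ne_of_gt hd)] at h1
  linarith

lemma oplus_toReal (g : ∀ n, X n → ℝ) (hnn : ∀ n x, 0 ≤ g n x) (x : ∀ n, X n) :
    (oplus g x).toReal = ∑' n, g n (x n) := by
  rw [oplus, ENNReal.tsum_toReal_eq (fun n => ENNReal.ofReal_ne_top)]
  exact tsum_congr fun n => ENNReal.toReal_ofReal (hnn n (x n))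

lemma summable_of_oplus_ne_top (g : ∀ n, X n → ℝ) (hnn : ∀ n x, 0 ≤ g n x) (x : ∀ n, X n)
    (hx : oplus g x ≠ ⊤) : Summable fun n => g n (x n) :=
  (ENNReal.summable_toReal hx).congr fun n => ENNReal.toReal_ofReal (hnn n (x n))

lemma oplus_ne_top_of_summable (g : ∀ n, X n → ℝ) (hnn : ∀ n x, 0 ≤ g n x) (x : ∀ n, X n)
    (hx : Summable fun n => g n (x n)) : oplus g x ≠ ⊤ := by
  rw [oplus, ← ENNReal.ofReal_tsum_of_nonneg (fun n => hnn n (x n)) hx]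
  exact ENNReal.ofReal_ne_top

lemma oplus_smul (g : ∀ n, X n → ℝ) {c : ℝ} (hc : 0 ≤ c) (x : ∀ n, X n) :
    oplus (fun n y => c * g n y) x = ENNReal.ofReal c * oplus g x := by
  simp_rw [oplus, ENNReal.ofReal_mul hc, ENNReal.tsum_mul_left]

lemma Gadm.smul {ν : ∀ n, Measure (X n)} {g : ∀ n, X n → ℝ} (hg : Gadm ν g) {c : ℝ}
    (hc : 0 ≤ c) : Gadm ν fun n y => c * g n y := by
  refine ⟨fun n => (hg.1 n).const_mul c, fun n y => mul_nonneg hc (hg.2.1 n y),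
    fun n => (hg.2.2.1 n).const_mul c, ?_⟩
  have : (fun n => ∫ y, c * g n y ∂ν n) = fun n => c * ∫ y, g n y ∂ν n := by
    funext n; exact integral_const_mul c _
  rw [this]
  exact hg.2.2.2.mul_left c

lemma measurable_oplus_toReal (g : ∀ n, X n → ℝ) (hg : ∀ n, Measurable (g n)) :
    Measurable fun x : ∀ n, X n => (oplus g x).toReal :=
  ENNReal.measurable_toReal.comp <| Measurable.ennreal_tsum fun n =>
    ENNReal.measurable_ofReal.comp ((hg n).comp (measurable_pi_apply n))

lemma BigB.const (ν : ∀ n, Measure (X n)) (hν : ∀ n, IsProbabilityMeasure (ν n)) (a : ℝ) :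
    BigB ν fun _ => a := by
  refine ⟨measurable_const, fun n _ => if n = 0 then |a| else 0, ?_, ?_⟩
  · refine ⟨fun n => measurable_const, fun n y => by simp only []; split_ifs <;> simp [abs_nonneg],
      fun n => ?_, ?_⟩
    · haveI := hν n
      exact integrable_const _
    · have : (fun n => ∫ _, (if n = 0 then |a| else 0) ∂ν n)
          = fun n => if n = 0 then |a| else 0 := by
        funext n
        haveI := hν n
        simp [integral_const]
      rw [this]
      exact summable_of_ne_finset_zero (s := {0}) (by intro n hn; simp at hn; simp [hn])
  · intro x
    right
    have : oplus (fun n (_ : X n) => if n = 0 then |a| else 0) x = ENNReal.ofReal |a| := by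
      rw [oplus]
      rw [tsum_eq_single 0 (fun b hb => by simp [hb])]
      simp
    rw [this, ENNReal.toReal_ofReal (abs_nonneg a)]

lemma BigB.smul' {ν : ∀ n, Measure (X n)} {f : (∀ n, X n) → ℝ} (hf : BigB ν f) (c : ℝ) :
    BigB ν fun x => c * f x := by
  obtain ⟨hmeas, g0, hg0, hb⟩ := hf
  refine ⟨hmeas.const_mul c, fun n y => |c| * g0 n y, hg0.smul (abs_nonneg c), fun x => ?_⟩
  rw [oplus_smul g0 (abs_nonneg c) x]
  rcases eq_or_ne c 0 with hc | hc
  · right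
    simp [hc]
  rcases eq_or_ne (oplus g0 x) ⊤ with hA | hA
  · left
    rw [hA, ENNReal.mul_top]
    simp [hc, abs_pos.mpr hc]
  · right
    have hb' : |f x| ≤ (oplus g0 x).toReal := by
      rcases hb x with h | h
      · exact absurd h hA
      · exact h
    rw [ENNReal.toReal_mul, ENNReal.toReal_ofReal (abs_nonneg c), abs_mul]
    exact mul_le_mul_of_nonneg_left hb' (abs_nonneg c)

lemma oplus_add (g₁ g₂ : ∀ n, X n → ℝ) (h₁ : ∀ n x, 0 ≤ g₁ n x) (h₂ : ∀ n x, 0 ≤ g₂ n x)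
    (x : ∀ n, X n) :
    oplus (fun n y => g₁ n y + g₂ n y) x = oplus g₁ x + oplus g₂ x := by
  simp_rw [oplus, ENNReal.ofReal_add (h₁ _ _) (h₂ _ _), ENNReal.tsum_add]

lemma Gadm.add' {ν : ∀ n, Measure (X n)} {g₁ g₂ : ∀ n, X n → ℝ} (h₁ : Gadm ν g₁)
    (h₂ : Gadm ν g₂) : Gadm ν fun n y => g₁ n y + g₂ n y := by
  refine ⟨fun n => (h₁.1 n).add (h₂.1 n), fun n y => add_nonneg (h₁.2.1 n y) (h₂.2.1 n y),
    fun n => (h₁.2.2.1 n).add (h₂.2.2.1 n), ?_⟩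
  have : (fun n => ∫ y, (g₁ n y + g₂ n y) ∂ν n)
      = fun n => (∫ y, g₁ n y ∂ν n) + ∫ y, g₂ n y ∂ν n := by
    funext n; exact integral_add (h₁.2.2.1 n) (h₂.2.2.1 n)
  rw [this]
  exact h₁.2.2.2.add h₂.2.2.2

lemma BigB.add' {ν : ∀ n, Measure (X n)} {f₁ f₂ : (∀ n, X n) → ℝ} (h₁ : BigB ν f₁)
    (h₂ : BigB ν f₂) : BigB ν fun x => f₁ x + f₂ x := by
  obtain ⟨hm₁, g₁, hg₁, hb₁⟩ := h₁
  obtain ⟨hm₂, g₂, hg₂, hb₂⟩ := h₂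
  refine ⟨hm₁.add hm₂, fun n y => g₁ n y + g₂ n y, hg₁.add' hg₂, fun x => ?_⟩
  rw [oplus_add g₁ g₂ hg₁.2.1 hg₂.2.1 x]
  rcases eq_or_ne (oplus g₁ x) ⊤ with hA | hA
  · left; simp [hA]
  rcases eq_or_ne (oplus g₂ x) ⊤ with hB | hB
  · left; simp [hB]
  right
  have hb₁' : |f₁ x| ≤ (oplus g₁ x).toReal := (hb₁ x).resolve_left hA
  have hb₂' : |f₂ x| ≤ (oplus g₂ x).toReal := (hb₂ x).resolve_left hB
  rw [ENNReal.toReal_add hA hB]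
  exact (abs_add_le _ _).trans (add_le_add hb₁' hb₂')

/-- Truncation: the expected excess over a large constant is small. -/
lemma exists_truncation {α : Type*} [MeasurableSpace α] (μ : Measure α)
    [IsProbabilityMeasure μ] (h : α → ℝ) (hmeas : Measurable h) (hnn : ∀ x, 0 ≤ h x)
    (hint : Integrable h μ) {δ : ℝ} (hδ : 0 < δ) :
    ∃ L : ℝ, 0 ≤ L ∧ ∫ x, max (h x - ((∫ y, h y ∂μ) + L)) 0 ∂μ ≤ δ := by
  set e := ∫ y, h y ∂μ with he
  have he_nn : 0 ≤ e := integral_nonneg hnn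
  have htend : Tendsto (fun K : ℕ => ∫ x, max (h x - (e + K)) 0 ∂μ) atTop (𝓝 0) := by
    have := MeasureTheory.tendsto_integral_of_dominated_convergence
      (F := fun (K : ℕ) x => max (h x - (e + K)) 0) (f := fun _ => (0 : ℝ)) (bound := h)
      (fun K => (((hmeas.sub measurable_const).max measurable_const).aestronglyMeasurable))
      hint
      (fun K => Filter.Eventually.of_forall fun x => by
        rw [Real.norm_eq_abs, abs_of_nonneg (le_max_right _ _)]
        refine max_le ?_ (hnn x)
        have : (0 : ℝ) ≤ e + K := by positivity
        linarith)
      (Filter.Eventually.of_forall fun x => by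
        refine tendsto_const_nhds.congr' ?_
        filter_upwards [eventually_ge_atTop ⌈h x⌉₊] with K hK
        have : h x ≤ (K : ℝ) := (Nat.le_ceil (h x)).trans (by exact_mod_cast hK)
        rw [max_eq_right (by linarith)])
    simpa [integral_zero] using this
  obtain ⟨K, hK⟩ := (htend.eventually_lt_const hδ).exists
  exact ⟨(K : ℝ), Nat.cast_nonneg K, hK.le⟩

/-- If `ψ` is a positive linear functional on `B(ν)` dominated (up to a finite constant)
by an increasing convex `φ` satisfying the marginal domination condition, then
`ψ(⊕g) = Σ_n ∫ g_n dν_n` for every `⊕g ∈ G(ν) ∩ B(ν)`. -/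
theorem stmt10 (ν : ∀ n, Measure (X n)) (hν : ∀ n, IsProbabilityMeasure (ν n))
    (ψ φ : ((∀ n, X n) → ℝ) → ℝ) (Cst : ℝ)
    (hadd : ∀ f₁ f₂, BigB ν f₁ → BigB ν f₂ → ψ (fun x => f₁ x + f₂ x) = ψ f₁ + ψ f₂)
    (hsmul : ∀ f, BigB ν f → ∀ c : ℝ, ψ (fun x => c * f x) = c * ψ f)
    (hpos : ∀ f, BigB ν f → (∀ x, 0 ≤ f x) → 0 ≤ ψ f)
    (hmono : ∀ f₁ f₂, BigB ν f₁ → BigB ν f₂ → (∀ x, f₁ x ≤ f₂ x) → φ f₁ ≤ φ f₂)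
    (hconv : ∀ f₁ f₂, BigB ν f₁ → BigB ν f₂ → ∀ t : ℝ, 0 ≤ t → t ≤ 1 →
      φ (fun x => t * f₁ x + (1 - t) * f₂ x) ≤ t * φ f₁ + (1 - t) * φ f₂)
    (hdom : ∀ f, BigB ν f → ∀ (m : ℝ) (g : ∀ n, X n → ℝ), Gadm ν g →
      (∀ x, oplus g x = ⊤ ∨ f x ≤ m + (oplus g x).toReal) →
      φ f ≤ m + ∑' n, ∫ x, g n x ∂ν n)
    (hbound : ∀ f, BigB ν f → ψ f - φ f ≤ Cst)
    (g : ∀ n, X n → ℝ) (hg : Gadm ν g) (hfin : ∀ x, oplus g x ≠ ⊤) :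
    ψ (fun x => (oplus g x).toReal) = ∑' n, ∫ x, g n x ∂ν n := by
  set e : ℕ → ℝ := fun n => ∫ x, g n x ∂ν n with he_def
  set S : ℝ := ∑' n, e n with hS_def
  set F : (∀ n, X n) → ℝ := fun x => (oplus g x).toReal with hF_def
  have hSe : Summable e := hg.2.2.2
  have he_nn : ∀ n, 0 ≤ e n := fun n => integral_nonneg (hg.2.1 n)
  have hBF : BigB ν F :=
    ⟨measurable_oplus_toReal g hg.1, g, hg,
      fun x => Or.inr (le_of_eq (abs_of_nonneg ENNReal.toReal_nonneg))⟩
  have hB1 : BigB ν fun _ => (1 : ℝ) := BigB.const ν hν 1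
  -- `ψ` of constants
  have hψconst : ∀ t : ℝ, ψ (fun _ => t) = t * ψ (fun _ => (1 : ℝ)) := by
    intro t
    have := hsmul (fun _ => (1 : ℝ)) hB1 t
    simpa using this
  have hφconst : ∀ t : ℝ, φ (fun _ => t) ≤ t := by
    intro t
    have h0 : Gadm ν fun n (_ : X n) => (0 : ℝ) :=
      ⟨fun n => measurable_const, fun n x => le_refl 0,
        fun n => integrable_zero _ _ _, by simpa using summable_zero⟩
    have := hdom (fun _ => t) (BigB.const ν hν t) t (fun n _ => 0) h0
      (fun x => Or.inr (by simp [oplus]))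
    simpa using this
  have hψ1 : ψ (fun _ => (1 : ℝ)) = 1 := by
    have key : ∀ t : ℝ, t * (ψ (fun _ => (1 : ℝ)) - 1) ≤ Cst := by
      intro t
      have hb := hbound (fun _ => t) (BigB.const ν hν t)
      have h1 := hψconst t
      have h2 := hφconst t
      have h3 : t * (ψ (fun _ => (1 : ℝ)) - 1) = ψ (fun _ => t) - t := by rw [h1]; ring
      linarith
    have := eq_zero_of_forall_mul_le key
    linarith
  -- upper bound : `ψ F ≤ S`
  have hup : ψ F ≤ S := by
    have key : ∀ c : ℝ, 0 < c → c * (ψ F - S) ≤ Cst := by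
      intro c hc
      have hBcF : BigB ν fun x => c * F x := hBF.smul' c
      have hGc : Gadm ν fun n y => c * g n y := hg.smul hc.le
      have hcond : ∀ x, oplus (fun n y => c * g n y) x = ⊤ ∨
          c * F x ≤ 0 + (oplus (fun n y => c * g n y) x).toReal := by
        intro x
        right
        rw [oplus_smul g hc.le x, ENNReal.toReal_mul, ENNReal.toReal_ofReal hc.le, zero_add]
      have hφ := hdom _ hBcF 0 _ hGc hcond
      have hsum : (∑' n, ∫ y, c * g n y ∂ν n) = c * S := by
        have h1 : (∑' n, ∫ y, c * g n y ∂ν n) = ∑' n, c * e n :=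
          tsum_congr fun n => integral_const_mul c _
        rw [h1, tsum_mul_left, hS_def]
      rw [hsum, zero_add] at hφ
      have hψc : ψ (fun x => c * F x) = c * ψ F := hsmul F hBF c
      have hb := hbound _ hBcF
      have h3 : c * (ψ F - S) = ψ (fun x => c * F x) - c * S := by rw [hψc]; ring
      linarith
    linarith [nonpos_of_forall_pos_mul_le key]
  -- lower bound : `S ≤ ψ F`
  have hBSF : BigB ν fun x => S - F x := by
    have h1 : BigB ν fun x => S + (-1 : ℝ) * F x :=
      (BigB.const ν hν S).add' (hBF.smul' (-1))
    have h2 : (fun x => S + (-1 : ℝ) * F x) = fun x => S - F x := by funext x; ring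
    rwa [h2] at h1
  have hψSF : ψ (fun x => S - F x) = S - ψ F := by
    have h1 := hadd (fun _ => S) (fun x => (-1 : ℝ) * F x) (BigB.const ν hν S)
      (hBF.smul' (-1))
    have h2 := hsmul F hBF (-1)
    have h3 : (fun x => S + (-1 : ℝ) * F x) = fun x => S - F x := by funext x; ring
    rw [h3] at h1
    rw [h1, h2, hψconst S, hψ1]
    ring
  have hlow : S ≤ ψ F := by
    have hεbound : ∀ ε : ℝ, 0 < ε → S - ψ F ≤ ε := by
      intro ε hε
      obtain ⟨N, hN⟩ : ∃ N : ℕ, ∑' k, e (k + N) < ε / 2 :=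
        ((tendsto_sum_nat_add e).eventually_lt_const (half_pos hε)).exists
      set ε' : ℝ := ε / (2 * (N + 1)) with hε'_def
      have hε' : 0 < ε' := by positivity
      have hchoice : ∀ n, ∃ L : ℝ, 0 ≤ L ∧
          ∫ x, max (g n x - (e n + L)) 0 ∂ν n ≤ ε' := fun n => by
        haveI := hν n
        exact exists_truncation (ν n) (g n) (hg.1 n) (hg.2.1 n) (hg.2.2.1 n) hε'
      choose L₀ hL₀nn hL₀ using hchoice
      set L : ℕ → ℝ := fun n => if n < N then L₀ n else 0 with hL_def
      have hLnn : ∀ n, 0 ≤ L n := fun n => by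
        rw [hL_def]; dsimp only; split_ifs; exacts [hL₀nn _, le_refl 0]
      set base : ∀ n, X n → ℝ := fun n y => max (e n + L n - g n y) 0 with hbase_def
      have hbase_nn : ∀ n y, 0 ≤ base n y := fun n y => le_max_right _ _
      have hbase_meas : ∀ n, Measurable (base n) := fun n =>
        (measurable_const.sub (hg.1 n)).max measurable_const
      have hbase_int : ∀ n, Integrable (base n) (ν n) := fun n => by
        haveI := hν n
        refine Integrable.mono' (integrable_const (|e n + L n|))
          ((hbase_meas n).aestronglyMeasurable) (Filter.Eventually.of_forall fun y => ?_)
        rw [Real.norm_eq_abs, abs_of_nonneg (hbase_nn n y)]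
        refine max_le ?_ (abs_nonneg _)
        have h1 := hg.2.1 n y
        have h2 := le_abs_self (e n + L n)
        have h3 : base n y = max (e n + L n - g n y) 0 := rfl
        linarith [le_max_left (e n + L n - g n y) (0 : ℝ)]
      set I : ℕ → ℝ := fun n => ∫ y, base n y ∂ν n with hI_def
      have hI_nn : ∀ n, 0 ≤ I n := fun n => integral_nonneg (hbase_nn n)
      have hI_tail : ∀ n, N ≤ n → I n ≤ e n := by
        intro n hn
        haveI := hν n
        have hL0 : L n = 0 := by rw [hL_def]; simp [Nat.not_lt.mpr hn]
        have hle : ∀ y, base n y ≤ e n := by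
          intro y
          have h1 : base n y = max (e n + L n - g n y) 0 := rfl
          rw [h1, hL0]
          refine max_le ?_ (he_nn n)
          have := hg.2.1 n y
          linarith
        calc I n ≤ ∫ _, e n ∂ν n := integral_mono (hbase_int n) (integrable_const _) hle
          _ = e n := by simp [integral_const]
      have hI_head : ∀ n, n < N → I n ≤ L₀ n + ε' := by
        intro n hn
        haveI := hν n
        have hLn : L n = L₀ n := by rw [hL_def]; simp [hn]
        have hptw : (fun y => base n y)
            = fun y => (e n + L n - g n y) + max (g n y - (e n + L n)) 0 := by
          funext y
          have h1 : base n y = max (e n + L n - g n y) 0 := rfl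
          rw [h1]
          rcases le_total (e n + L n - g n y) 0 with h | h
          · rw [max_eq_right h, max_eq_left (by linarith)]; ring
          · rw [max_eq_left h, max_eq_right (by linarith)]; ring
        have hint2 : Integrable (fun y => max (g n y - (e n + L n)) 0) (ν n) := by
          refine Integrable.mono' (hg.2.2.1 n)
            (((hg.1 n).sub measurable_const).max measurable_const).aestronglyMeasurable
            (Filter.Eventually.of_forall fun y => ?_)
          rw [Real.norm_eq_abs, abs_of_nonneg (le_max_right _ _)]
          have h1 := hg.2.1 n y
          have h2 : 0 ≤ e n + L n := add_nonneg (he_nn n) (hLnn n)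
          exact max_le (by linarith) h1
        have hint1 : Integrable (fun y => e n + L n - g n y) (ν n) :=
          (integrable_const _).sub (hg.2.2.1 n)
        have hIn : I n = (e n + L n - e n) + ∫ y, max (g n y - (e n + L n)) 0 ∂ν n := by
          have h4 : I n = ∫ y, ((e n + L n - g n y) + max (g n y - (e n + L n)) 0) ∂ν n := by
            rw [hI_def]; dsimp only; rw [hptw]
          rw [h4, integral_add hint1 hint2, integral_sub (integrable_const _) (hg.2.2.1 n)]
          simp [integral_const]
          simp only [he_def]; ring
        have := hL₀ n
        rw [hIn, hLn] at *
        linarith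
      have hI_summable : Summable I := by
        have hifs : Summable fun n => if n < N then L₀ n + ε' else 0 :=
          summable_of_ne_finset_zero (s := Finset.range N)
            (fun n hn => by rw [Finset.mem_range] at hn; simp [hn])
        refine Summable.of_nonneg_of_le hI_nn (fun n => ?_) (hSe.add hifs)
        by_cases hn : n < N
        · simp only [if_pos hn]
          have := hI_head n hn
          have := he_nn n
          linarith
        · simp only [if_neg hn]
          rw [add_zero]
          exact hI_tail n (Nat.le_of_not_lt hn)
      set m₀ : ℝ := -(∑ n ∈ Finset.range N, L₀ n) with hm₀_def
      have key : m₀ + ∑' n, I n ≤ ε := by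
        have hsplit : (∑ n ∈ Finset.range N, I n) + ∑' k, I (k + N) = ∑' n, I n :=
          Summable.sum_add_tsum_nat_add N hI_summable
        have h1 : (∑ n ∈ Finset.range N, I n) ≤ ∑ n ∈ Finset.range N, (L₀ n + ε') :=
          Finset.sum_le_sum fun n hn => hI_head n (Finset.mem_range.mp hn)
        have h2 : (∑ n ∈ Finset.range N, (L₀ n + ε'))
            = (∑ n ∈ Finset.range N, L₀ n) + N * ε' := by
          rw [Finset.sum_add_distrib, Finset.sum_const, Finset.card_range, nsmul_eq_mul]
        have h3 : (∑' k, I (k + N)) ≤ ∑' k, e (k + N) :=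
          Summable.tsum_le_tsum (fun k => hI_tail (k + N) (Nat.le_add_left N k))
            ((summable_nat_add_iff N).mpr hI_summable) ((summable_nat_add_iff N).mpr hSe)
        have h4 : (N : ℝ) * ε' ≤ ε / 2 := by
          have hN1 : ((N : ℝ) + 1) ≠ 0 := by positivity
          have h5 : (N : ℝ) / (N + 1) ≤ 1 := by
            rw [div_le_one (by positivity)]; linarith
          have h6 : (N : ℝ) * ε' = (ε / 2) * ((N : ℝ) / (N + 1)) := by
            rw [hε'_def]; field_simp
          calc (N : ℝ) * ε' = (ε / 2) * ((N : ℝ) / (N + 1)) := h6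
            _ ≤ (ε / 2) * 1 := by
                apply mul_le_mul_of_nonneg_left h5 (by positivity)
            _ = ε / 2 := mul_one _
        rw [hm₀_def]
        linarith
      have hGbase : Gadm ν base := ⟨hbase_meas, hbase_nn, hbase_int, hI_summable⟩
      have hLsum : Summable L :=
        summable_of_ne_finset_zero (s := Finset.range N)
          (fun n hn => by rw [hL_def]; dsimp only; rw [Finset.mem_range] at hn; simp [hn])
      have hLtsum : (∑' n, L n) = ∑ n ∈ Finset.range N, L₀ n := by
        rw [tsum_eq_sum (s := Finset.range N)
          (fun n hn => by rw [hL_def]; dsimp only; rw [Finset.mem_range] at hn; simp [hn])]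
        refine Finset.sum_congr rfl fun n hn => ?_
        rw [Finset.mem_range] at hn
        rw [hL_def]; simp [hn]
      have hcbound : ∀ c : ℝ, 0 < c → c * (S - ψ F - ε) ≤ Cst := by
        intro c hc
        have hBc : BigB ν fun x => c * (S - F x) := hBSF.smul' c
        have hcond : ∀ x, oplus (fun n y => c * base n y) x = ⊤ ∨
            c * (S - F x) ≤ c * m₀ + (oplus (fun n y => c * base n y) x).toReal := by
          intro x
          rcases eq_or_ne (oplus (fun n y => c * base n y) x) ⊤ with hT | hT
          · exact Or.inl hT
          right
          have hsb : Summable fun n => base n (x n) := by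
            have h1 := summable_of_oplus_ne_top _
              (fun n y => mul_nonneg hc.le (hbase_nn n y)) x hT
            have h2 := h1.mul_left c⁻¹
            refine h2.congr fun n => ?_
            field_simp
          have htoReal : (oplus (fun n y => c * base n y) x).toReal
              = c * ∑' n, base n (x n) := by
            rw [oplus_toReal _ (fun n y => mul_nonneg hc.le (hbase_nn n y)) x, tsum_mul_left]
          rw [htoReal]
          have hgx : Summable fun n => g n (x n) :=
            summable_of_oplus_ne_top g hg.2.1 x (hfin x)
          have hFx : F x = ∑' n, g n (x n) := oplus_toReal g hg.2.1 x
          have ht1 : (∑' n, (e n - g n (x n))) ≤ ∑' n, (base n (x n) - L n) := by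
            refine Summable.tsum_le_tsum (fun n => ?_) (hSe.sub hgx) (hsb.sub hLsum)
            have h : e n + L n - g n (x n) ≤ base n (x n) := le_max_left _ _
            linarith
          have ht2 : (∑' n, (e n - g n (x n)))
              = (∑' n, e n) - ∑' n, g n (x n) := Summable.tsum_sub hSe hgx
          have ht3 : (∑' n, (base n (x n) - L n))
              = (∑' n, base n (x n)) - ∑' n, L n := Summable.tsum_sub hsb hLsum
          have hkey : S - F x ≤ m₀ + ∑' n, base n (x n) := by
            rw [hS_def, hm₀_def, hFx, hLtsum] at *
            linarith
          have hmul := mul_le_mul_of_nonneg_left hkey hc.le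
          have hexp : c * (m₀ + ∑' n, base n (x n))
              = c * m₀ + c * ∑' n, base n (x n) := by ring
          linarith
        have hφc := hdom _ hBc (c * m₀) _ (hGbase.smul hc.le) hcond
        have hsum : (∑' n, ∫ y, c * base n y ∂ν n) = c * ∑' n, I n := by
          have h1 : (∑' n, ∫ y, c * base n y ∂ν n) = ∑' n, c * I n :=
            tsum_congr fun n => integral_const_mul c _
          rw [h1, tsum_mul_left]
        rw [hsum] at hφc
        have hψc : ψ (fun x => c * (S - F x)) = c * (S - ψ F) := by
          have h1 := hsmul (fun x => S - F x) hBSF c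
          rw [h1, hψSF]
        have hb := hbound _ hBc
        have hkey2 : c * (m₀ + ∑' n, I n) ≤ c * ε := mul_le_mul_of_nonneg_left key hc.le
        have hexp1 : c * (S - ψ F - ε) = c * (S - ψ F) - c * ε := by ring
        have hexp2 : c * (m₀ + ∑' n, I n) = c * m₀ + c * ∑' n, I n := by ring
        linarith
      have := nonpos_of_forall_pos_mul_le hcbound
      linarith
    by_contra hcon
    push_neg at hcon
    have := hεbound ((S - ψ F) / 2) (by linarith)
    linarith
  exact le_antisymm hup hlow
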